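/- Asymptotic value convergence to the Kelly value: Fix α ∈ (0,1). Then (1/n) · log( sup_{W ∈ W̄} Q_{n,α}(W) ) → Σ_{i=1}^m p_i log(p_i/q_i) as n → ∞ (in particular the supremum is strictly positive for all sufficiently large n). -/

import Mathlib

open Finset Filter Topology
open scoped Classical

noncomputable section

/-- The closed Arrow–Debreu wealth simplex `{W ∈ [0,∞)^m : Σ q_i W_i = 1}`. -/
def closedSimplex {m : ℕ} (q : Fin m → ℝ) : Set (Fin m → ℝ) :=
  {W | (∀ i, 0 ≤ W i) ∧ ∑ i, q i * W i = 1}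

/-- The open Arrow–Debreu wealth simplex `{W ∈ (0,∞)^m : Σ q_i W_i = 1}`. -/
def openSimplex {m : ℕ} (q : Fin m → ℝ) : Set (Fin m → ℝ) :=
  {W | (∀ i, 0 < W i) ∧ ∑ i, q i * W i = 1}

/-- The finite set `C_n` of count vectors `k : Fin m → ℕ` with `Σ k_i = n`. -/
def countFinset (m n : ℕ) : Finset (Fin m → ℕ) :=
  (Fintype.piFinset fun _ : Fin m => Finset.range (n + 1)).filter fun k => ∑ i, k i = n

/-- The monomial `W^k := Π_i W_i^{k_i}` (with the convention `0^0 = 1`). -/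
def mono {m : ℕ} (W : Fin m → ℝ) (k : Fin m → ℕ) : ℝ := ∏ i, W i ^ k i

/-- The multinomial probability `π_k = (n!/(k_1!⋯k_m!))·Π p_i^{k_i}`. -/
def countProb {m : ℕ} (p : Fin m → ℝ) (k : Fin m → ℕ) : ℝ :=
  (Nat.multinomial Finset.univ k : ℝ) * ∏ i, p i ^ k i

/-- The upper α-quantile of terminal wealth
`Q_{n,α}(W) := sup{t ∈ [0,∞) : Σ_{k ∈ C_n : W^k ≥ t} π_k ≥ α}`. -/
def upperQuantile {m : ℕ} (p : Fin m → ℝ) (n : ℕ) (α : ℝ) (W : Fin m → ℝ) : ℝ :=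
  sSup {t : ℝ | 0 ≤ t ∧
    α ≤ ∑ k ∈ countFinset m n, if t ≤ mono W k then countProb p k else 0}

/-- The union of the count hyperplanes `H_{k,ℓ}`. -/
def hyperUnion (m n : ℕ) : Set (Fin m → ℝ) :=
  {u | ∃ k ∈ countFinset m n, ∃ l ∈ countFinset m n,
    k ≠ l ∧ ∑ i, ((k i : ℝ) - (l i : ℝ)) * u i = 0}

/-- A chamber is a connected component of the complement of the count arrangement. -/
def IsChamber (m n : ℕ) (Γ : Set (Fin m → ℝ)) : Prop :=
  ∃ u ∈ (hyperUnion m n)ᶜ, Γ = connectedComponentIn (hyperUnion m n)ᶜ u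

/-- `F_Γ := {W ∈ W⁺⁺ : log W ∈ Γ}`. -/
def chamberFace {m : ℕ} (q : Fin m → ℝ) (Γ : Set (Fin m → ℝ)) : Set (Fin m → ℝ) :=
  {W | W ∈ openSimplex q ∧ (fun i => Real.log (W i)) ∈ Γ}

/-- `k` is the quantile count vector `k_{α,Γ}` of the chamber `Γ`: the tail mass at `W^k`
is at least `α`, while the strict tail mass is below `α`, for every `W ∈ F_Γ`. -/
def IsQuantileVec {m : ℕ} (p q : Fin m → ℝ) (n : ℕ) (α : ℝ) (Γ : Set (Fin m → ℝ))
    (k : Fin m → ℕ) : Prop :=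
  k ∈ countFinset m n ∧
  ∀ W ∈ chamberFace q Γ,
    α ≤ (∑ l ∈ countFinset m n, if mono W k ≤ mono W l then countProb p l else 0) ∧
    (∑ l ∈ countFinset m n, if mono W k < mono W l then countProb p l else 0) < α



section AuxKelly

lemma mem_countFinset' {m n : ℕ} {k : Fin m → ℕ} :
    k ∈ countFinset m n ↔ ∑ i, k i = n := by
  simp only [countFinset, Finset.mem_filter, Fintype.mem_piFinset, Finset.mem_range]
  refine ⟨fun h => h.2, fun h => ⟨fun i => ?_, h⟩⟩
  have : k i ≤ ∑ j, k j := Finset.single_le_sum (fun j _ => Nat.zero_le _) (Finset.mem_univ i)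
  omega

lemma countFinset_eq_piAntidiag (m n : ℕ) :
    countFinset m n = Finset.piAntidiag Finset.univ n := by
  ext k
  simp [mem_countFinset', Finset.mem_piAntidiag]

lemma sum_countProb_mul_mono {m : ℕ} (p W : Fin m → ℝ) (n : ℕ) :
    ∑ k ∈ countFinset m n, countProb p k * mono W k = (∑ i, p i * W i) ^ n := by
  rw [countFinset_eq_piAntidiag, Finset.sum_pow_eq_sum_piAntidiag]
  refine Finset.sum_congr rfl fun k _ => ?_
  simp only [countProb, mono, mul_pow, Finset.prod_mul_distrib]
  ring

lemma sum_countProb {m : ℕ} (p : Fin m → ℝ) (hpsum : ∑ i, p i = 1) (n : ℕ) :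
    ∑ k ∈ countFinset m n, countProb p k = 1 := by
  have h := sum_countProb_mul_mono p (fun _ => 1) n
  simpa [mono, hpsum] using h

lemma countProb_nonneg {m : ℕ} {p : Fin m → ℝ} (hp : ∀ i, 0 ≤ p i) (k : Fin m → ℕ) :
    0 ≤ countProb p k :=
  mul_nonneg (Nat.cast_nonneg _) (Finset.prod_nonneg fun i _ => pow_nonneg (hp i) _)

lemma mono_nonneg {m : ℕ} {W : Fin m → ℝ} (hW : ∀ i, 0 ≤ W i) (k : Fin m → ℕ) :
    0 ≤ mono W k :=
  Finset.prod_nonneg fun i _ => pow_nonneg (hW i) _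

lemma mono_pos {m : ℕ} {W : Fin m → ℝ} (hW : ∀ i, 0 < W i) (k : Fin m → ℕ) :
    0 < mono W k :=
  Finset.prod_pos fun i _ => pow_pos (hW i) _

lemma mono_rpow {m : ℕ} {W : Fin m → ℝ} (hW : ∀ i, 0 ≤ W i) (k : Fin m → ℕ) (lam : ℝ) :
    mono W k ^ lam = mono (fun i => W i ^ lam) k := by
  rw [mono, mono, ← Real.finset_prod_rpow _ _ (fun i _ => pow_nonneg (hW i) _)]
  refine Finset.prod_congr rfl fun i _ => ?_
  rw [← Real.rpow_natCast (W i) (k i), ← Real.rpow_mul (hW i), mul_comm,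
    Real.rpow_mul (hW i), Real.rpow_natCast]

lemma tail_split {m : ℕ} (n : ℕ) (p : Fin m → ℝ) (hpsum : ∑ i, p i = 1) (W : Fin m → ℝ)
    (t : ℝ) :
    (∑ k ∈ countFinset m n, if t ≤ mono W k then countProb p k else 0)
      = 1 - ∑ k ∈ countFinset m n, if mono W k < t then countProb p k else 0 := by
  rw [eq_sub_iff_add_eq, ← Finset.sum_add_distrib, ← sum_countProb p hpsum n]
  refine Finset.sum_congr rfl fun k _ => ?_
  by_cases h : t ≤ mono W k
  · rw [if_pos h, if_neg (not_lt.mpr h), add_zero]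
  · rw [if_neg h, if_pos (not_le.mp h), zero_add]

lemma markov_tail {m n : ℕ} {p : Fin m → ℝ} (hp : ∀ i, 0 ≤ p i) (W : Fin m → ℝ)
    (hW : ∀ i, 0 ≤ W i) {t lam : ℝ} (ht : 0 < t) (hlam : 0 < lam) :
    (∑ k ∈ countFinset m n, if t ≤ mono W k then countProb p k else 0)
      ≤ t ^ (-lam) * (∑ i, p i * W i ^ lam) ^ n := by
  rw [← sum_countProb_mul_mono p (fun i => W i ^ lam) n, Finset.mul_sum]
  refine Finset.sum_le_sum fun k _ => ?_
  have hm : 0 ≤ mono W k := mono_nonneg hW k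
  have hm' : 0 ≤ mono (fun i => W i ^ lam) k :=
    mono_nonneg (fun i => Real.rpow_nonneg (hW i) lam) k
  have hcp := countProb_nonneg hp k
  have htl : 0 < t ^ (-lam) := Real.rpow_pos_of_pos ht _
  by_cases h : t ≤ mono W k
  · rw [if_pos h]
    have h1 : t ^ lam ≤ mono W k ^ lam := Real.rpow_le_rpow ht.le h hlam.le
    have h2 : (1:ℝ) ≤ t ^ (-lam) * mono W k ^ lam := by
      have : t ^ (-lam) * t ^ lam = 1 := by
        rw [← Real.rpow_add ht]; simp
      calc (1:ℝ) = t ^ (-lam) * t ^ lam := this.symm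
        _ ≤ t ^ (-lam) * mono W k ^ lam := by
            exact mul_le_mul_of_nonneg_left h1 htl.le
    calc countProb p k = countProb p k * 1 := (mul_one _).symm
      _ ≤ countProb p k * (t ^ (-lam) * mono W k ^ lam) :=
          mul_le_mul_of_nonneg_left h2 hcp
      _ = t ^ (-lam) * (countProb p k * mono W k ^ lam) := by ring
      _ = t ^ (-lam) * (countProb p k * mono (fun i => W i ^ lam) k) := by
          rw [mono_rpow hW]
  · rw [if_neg h]
    exact mul_nonneg htl.le (mul_nonneg hcp hm')

lemma chernoff_strict {m n : ℕ} {p : Fin m → ℝ} (hp : ∀ i, 0 ≤ p i) {W : Fin m → ℝ}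
    (hW : ∀ i, 0 < W i) {t th : ℝ} (ht : 0 < t) (hth : 0 < th) :
    (∑ k ∈ countFinset m n, if mono W k < t then countProb p k else 0)
      ≤ t ^ th * (∑ i, p i * W i ^ (-th)) ^ n := by
  rw [← sum_countProb_mul_mono p (fun i => W i ^ (-th)) n, Finset.mul_sum]
  refine Finset.sum_le_sum fun k _ => ?_
  have hm : 0 < mono W k := mono_pos hW k
  have hm' : 0 ≤ mono (fun i => W i ^ (-th)) k :=
    mono_nonneg (fun i => Real.rpow_nonneg (hW i).le _) k
  have hcp := countProb_nonneg hp k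
  have htl : 0 < t ^ th := Real.rpow_pos_of_pos ht _
  by_cases h : mono W k < t
  · rw [if_pos h]
    have h1 : t ^ (-th) ≤ mono W k ^ (-th) :=
      Real.rpow_le_rpow_of_nonpos hm h.le (neg_nonpos.mpr hth.le)
    have h2 : (1:ℝ) ≤ t ^ th * mono W k ^ (-th) := by
      have : t ^ th * t ^ (-th) = 1 := by
        rw [← Real.rpow_add ht]; simp
      calc (1:ℝ) = t ^ th * t ^ (-th) := this.symm
        _ ≤ t ^ th * mono W k ^ (-th) := mul_le_mul_of_nonneg_left h1 htl.le
    calc countProb p k = countProb p k * 1 := (mul_one _).symm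
      _ ≤ countProb p k * (t ^ th * mono W k ^ (-th)) := mul_le_mul_of_nonneg_left h2 hcp
      _ = t ^ th * (countProb p k * mono W k ^ (-th)) := by ring
      _ = t ^ th * (countProb p k * mono (fun i => W i ^ (-th)) k) := by
          rw [mono_rpow (fun i => (hW i).le)]
  · rw [if_neg h]
    exact mul_nonneg htl.le (mul_nonneg hcp hm')

lemma holder_bound {m : ℕ} {p q W : Fin m → ℝ} (hp : ∀ i, 0 < p i) (hq : ∀ i, 0 < q i)
    (hW : ∀ i, 0 ≤ W i) (hWs : ∑ i, q i * W i = 1) {lam : ℝ} (h0 : 0 < lam) (h1 : lam < 1) :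
    ∑ i, p i * W i ^ lam ≤ (∑ i, q i * (p i / q i) ^ (1 / (1 - lam))) ^ (1 - lam) := by
  have h1' : 0 < 1 - lam := by linarith
  have hpq : Real.HolderConjugate (1/lam) (1/(1-lam)) := by
    exact Real.holderConjugate_one_div h0 h1' (by ring)
  have key := Real.inner_le_Lp_mul_Lq Finset.univ
    (fun i => (q i * W i) ^ lam) (fun i => p i * q i ^ (-lam)) hpq
  have e1 : ∀ i : Fin m, (q i * W i) ^ lam * (p i * q i ^ (-lam)) = p i * W i ^ lam := by
    intro i
    rw [Real.mul_rpow (hq i).le (hW i)]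
    have : q i ^ lam * q i ^ (-lam) = 1 := by rw [← Real.rpow_add (hq i)]; simp
    calc q i ^ lam * W i ^ lam * (p i * q i ^ (-lam))
        = p i * W i ^ lam * (q i ^ lam * q i ^ (-lam)) := by ring
      _ = p i * W i ^ lam := by rw [this, mul_one]
  have e2 : ∑ i, |(q i * W i) ^ lam| ^ (1/lam) = 1 := by
    have : ∀ i : Fin m, |(q i * W i) ^ lam| ^ (1/lam) = q i * W i := by
      intro i
      rw [abs_of_nonneg (Real.rpow_nonneg (mul_nonneg (hq i).le (hW i)) _),
        ← Real.rpow_mul (mul_nonneg (hq i).le (hW i)), mul_one_div_cancel h0.ne',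
        Real.rpow_one]
    rw [Finset.sum_congr rfl fun i _ => this i, hWs]
  have e3 : ∑ i, |p i * q i ^ (-lam)| ^ (1/(1-lam))
      = ∑ i, q i * (p i / q i) ^ (1 / (1 - lam)) := by
    refine Finset.sum_congr rfl fun i _ => ?_
    have hr : -lam * (1/(1-lam)) = 1 - 1/(1-lam) := by field_simp; ring
    rw [abs_of_nonneg (mul_nonneg (hp i).le (Real.rpow_nonneg (hq i).le _)),
      Real.mul_rpow (hp i).le (Real.rpow_nonneg (hq i).le _),
      ← Real.rpow_mul (hq i).le, hr, Real.rpow_sub (hq i), Real.rpow_one,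
      Real.div_rpow (hp i).le (hq i).le]
    ring
  have e4 : (1:ℝ) / (1 / lam) = lam := by rw [one_div_one_div]
  have e5 : (1:ℝ) / (1 / (1-lam)) = 1 - lam := by rw [one_div_one_div]
  simp only [e4, e5, e2, e3] at key
  rw [Real.one_rpow, one_mul] at key
  calc ∑ i, p i * W i ^ lam = ∑ i, (q i * W i) ^ lam * (p i * q i ^ (-lam)) :=
        (Finset.sum_congr rfl fun i _ => (e1 i).symm)
    _ ≤ _ := key

lemma F_one {m : ℕ} {p q : Fin m → ℝ} (hq : ∀ i, 0 < q i)
    (hpsum : ∑ i, p i = 1) : (∑ i, q i * (p i / q i) ^ (1:ℝ)) = 1 := by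
  have h : ∀ i : Fin m, q i * (p i / q i) ^ (1:ℝ) = p i := fun i => by
    rw [Real.rpow_one, mul_div_cancel₀ _ (hq i).ne']
  rw [Finset.sum_congr rfl fun i _ => h i, hpsum]

lemma hasDerivAt_logF {m : ℕ} {p q : Fin m → ℝ} (hp : ∀ i, 0 < p i) (hq : ∀ i, 0 < q i)
    (hpsum : ∑ i, p i = 1) :
    HasDerivAt (fun r : ℝ => Real.log (∑ i, q i * (p i / q i) ^ r))
      (∑ i, p i * Real.log (p i / q i)) 1 := by
  have hF : HasDerivAt (fun r : ℝ => ∑ i, q i * (p i / q i) ^ r)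
      (∑ i, q i * ((p i / q i) ^ (1:ℝ) * Real.log (p i / q i))) 1 :=
    HasDerivAt.fun_sum fun i _ =>
      ((Real.hasStrictDerivAt_const_rpow (div_pos (hp i) (hq i)) 1).hasDerivAt).const_mul _
  have h := hF.log (by rw [F_one hq hpsum]; exact one_ne_zero)
  convert h using 1
  rw [F_one hq hpsum, div_one]
  refine Finset.sum_congr rfl fun i _ => ?_
  rw [Real.rpow_one, ← mul_assoc, mul_div_cancel₀ _ (hq i).ne']

lemma logF_one {m : ℕ} {p q : Fin m → ℝ} (hq : ∀ i, 0 < q i)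
    (hpsum : ∑ i, p i = 1) :
    Real.log (∑ i, q i * (p i / q i) ^ (1:ℝ)) = 0 := by
  rw [F_one hq hpsum, Real.log_one]

lemma slope_right {m : ℕ} {p q : Fin m → ℝ} (hp : ∀ i, 0 < p i) (hq : ∀ i, 0 < q i)
    (hpsum : ∑ i, p i = 1) {ε : ℝ} (hε : 0 < ε) :
    ∃ r : ℝ, 1 < r ∧ Real.log (∑ i, q i * (p i / q i) ^ r)
      < ((∑ i, p i * Real.log (p i / q i)) + ε) * (r - 1) := by
  set V := ∑ i, p i * Real.log (p i / q i) with hV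
  have T := hasDerivAt_iff_tendsto_slope.mp (hasDerivAt_logF hp hq hpsum)
  have T2 : Tendsto (slope (fun r : ℝ => Real.log (∑ i, q i * (p i / q i) ^ r)) 1)
      (𝓝[>] (1:ℝ)) (𝓝 V) :=
    T.mono_left (nhdsWithin_mono _ fun x hx => ne_of_gt hx)
  have ev := T2.eventually (gt_mem_nhds (lt_add_of_pos_right V hε))
  obtain ⟨r, hslope, hr⟩ := (ev.and self_mem_nhdsWithin).exists
  have hr1 : (1:ℝ) < r := hr
  have hr' : (0:ℝ) < r - 1 := by linarith
  refine ⟨r, hr1, ?_⟩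
  rw [slope_def_field, logF_one hq hpsum, sub_zero] at hslope
  exact (div_lt_iff₀ hr').mp hslope

lemma slope_left {m : ℕ} {p q : Fin m → ℝ} (hp : ∀ i, 0 < p i) (hq : ∀ i, 0 < q i)
    (hpsum : ∑ i, p i = 1) {ε : ℝ} (hε : 0 < ε) :
    ∃ r : ℝ, r < 1 ∧ Real.log (∑ i, q i * (p i / q i) ^ r)
      < ((∑ i, p i * Real.log (p i / q i)) - ε) * (r - 1) := by
  set V := ∑ i, p i * Real.log (p i / q i) with hV
  have T := hasDerivAt_iff_tendsto_slope.mp (hasDerivAt_logF hp hq hpsum)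
  have T2 : Tendsto (slope (fun r : ℝ => Real.log (∑ i, q i * (p i / q i) ^ r)) 1)
      (𝓝[<] (1:ℝ)) (𝓝 V) :=
    T.mono_left (nhdsWithin_mono _ fun x hx => ne_of_lt hx)
  have ev := T2.eventually (lt_mem_nhds (by linarith : V - ε < V))
  obtain ⟨r, hslope, hr⟩ := (ev.and self_mem_nhdsWithin).exists
  have hr1 : r < 1 := hr
  have hr' : r - 1 < 0 := by linarith
  refine ⟨r, hr1, ?_⟩
  rw [slope_def_field, logF_one hq hpsum, sub_zero] at hslope
  exact (lt_div_iff_of_neg hr').mp hslope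

lemma zero_mem_qset {m n : ℕ} {p : Fin m → ℝ} (hp : ∀ i, 0 ≤ p i) (hpsum : ∑ i, p i = 1)
    {α : ℝ} (hα : α ≤ 1) {W : Fin m → ℝ} (hW : ∀ i, 0 ≤ W i) :
    (0:ℝ) ∈ {t : ℝ | 0 ≤ t ∧
      α ≤ ∑ k ∈ countFinset m n, if t ≤ mono W k then countProb p k else 0} := by
  refine ⟨le_refl 0, ?_⟩
  have : ∀ k ∈ countFinset m n,
      (if (0:ℝ) ≤ mono W k then countProb p k else 0) = countProb p k := fun k _ =>
    if_pos (mono_nonneg hW k)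
  rw [Finset.sum_congr rfl this, sum_countProb p hpsum n]
  exact hα

lemma qset_le_bound {m n : ℕ} {p q : Fin m → ℝ} (hp : ∀ i, 0 < p i) (hq : ∀ i, 0 < q i)
    {α : ℝ} (hα0 : 0 < α) {W : Fin m → ℝ} (hW : W ∈ closedSimplex q)
    {lam : ℝ} (h0 : 0 < lam) (h1 : lam < 1) {t : ℝ}
    (ht : t ∈ {t : ℝ | 0 ≤ t ∧
      α ≤ ∑ k ∈ countFinset m n, if t ≤ mono W k then countProb p k else 0}) :
    t ≤ (((∑ i, q i * (p i / q i) ^ (1 / (1 - lam))) ^ (1 - lam)) ^ n / α) ^ (1/lam) := by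
  obtain ⟨ht0, htα⟩ := ht
  set A : ℝ := ∑ i, q i * (p i / q i) ^ (1 / (1 - lam)) with hA
  have hA0 : 0 ≤ A :=
    Finset.sum_nonneg fun i _ => mul_nonneg (hq i).le (Real.rpow_nonneg (div_nonneg (hp i).le (hq i).le) _)
  have hD0 : 0 ≤ (A ^ (1 - lam)) ^ n / α :=
    div_nonneg (pow_nonneg (Real.rpow_nonneg hA0 _) n) hα0.le
  rcases eq_or_lt_of_le ht0 with h | h
  · rw [← h]; exact Real.rpow_nonneg hD0 _
  · have hmark := markov_tail (m := m) (n := n) (fun i => (hp i).le) W hW.1 h h0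
    have hhold : (∑ i, p i * W i ^ lam) ^ n ≤ (A ^ (1 - lam)) ^ n :=
      pow_le_pow_left₀ (Finset.sum_nonneg fun i _ =>
        mul_nonneg (hp i).le (Real.rpow_nonneg (hW.1 i) _))
        (holder_bound hp hq hW.1 hW.2 h0 h1) n
    have htlam : 0 < t ^ lam := Real.rpow_pos_of_pos h _
    have key : α ≤ (t ^ lam)⁻¹ * (A ^ (1 - lam)) ^ n := by
      calc α ≤ t ^ (-lam) * (∑ i, p i * W i ^ lam) ^ n := le_trans htα hmark
        _ ≤ t ^ (-lam) * (A ^ (1 - lam)) ^ n :=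
            mul_le_mul_of_nonneg_left hhold (Real.rpow_nonneg ht0 _)
        _ = (t ^ lam)⁻¹ * (A ^ (1 - lam)) ^ n := by rw [Real.rpow_neg ht0]
    have key2 : t ^ lam ≤ (A ^ (1 - lam)) ^ n / α := by
      rw [le_div_iff₀ hα0]
      calc t ^ lam * α ≤ t ^ lam * ((t ^ lam)⁻¹ * (A ^ (1 - lam)) ^ n) :=
            mul_le_mul_of_nonneg_left key htlam.le
        _ = (A ^ (1 - lam)) ^ n := by field_simp
    calc t = (t ^ lam) ^ (1/lam) := by
          rw [← Real.rpow_mul ht0, mul_one_div_cancel h0.ne', Real.rpow_one]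
      _ ≤ ((A ^ (1 - lam)) ^ n / α) ^ (1/lam) :=
          Real.rpow_le_rpow htlam.le key2 (by positivity)

lemma upperQuantile_le_bound {m n : ℕ} {p q : Fin m → ℝ} (hp : ∀ i, 0 < p i)
    (hq : ∀ i, 0 < q i) (hpsum : ∑ i, p i = 1) {α : ℝ} (hα0 : 0 < α) (hα1 : α ≤ 1)
    {W : Fin m → ℝ} (hW : W ∈ closedSimplex q) {lam : ℝ} (h0 : 0 < lam) (h1 : lam < 1) :
    upperQuantile p n α W
      ≤ (((∑ i, q i * (p i / q i) ^ (1 / (1 - lam))) ^ (1 - lam)) ^ n / α) ^ (1/lam) :=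
  csSup_le ⟨0, zero_mem_qset (fun i => (hp i).le) hpsum hα1 hW.1⟩
    fun _ ht => qset_le_bound hp hq hα0 hW h0 h1 ht

lemma kelly_mem_closedSimplex {m : ℕ} {p q : Fin m → ℝ} (hp : ∀ i, 0 < p i)
    (hq : ∀ i, 0 < q i) (hpsum : ∑ i, p i = 1) :
    (fun i => p i / q i) ∈ closedSimplex q := by
  refine ⟨fun i => div_nonneg (hp i).le (hq i).le, ?_⟩
  rw [← hpsum]
  exact Finset.sum_congr rfl fun i _ => mul_div_cancel₀ _ (hq i).ne'

lemma bddAbove_image {m n : ℕ} {p q : Fin m → ℝ} (hp : ∀ i, 0 < p i)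
    (hq : ∀ i, 0 < q i) (hpsum : ∑ i, p i = 1) {α : ℝ} (hα0 : 0 < α) (hα1 : α ≤ 1) :
    BddAbove (upperQuantile p n α '' closedSimplex q) := by
  refine ⟨(((∑ i, q i * (p i / q i) ^ (1 / (1 - (1:ℝ)/2))) ^ (1 - (1:ℝ)/2)) ^ n / α) ^ (1/((1:ℝ)/2)), ?_⟩
  rintro y ⟨W, hW, rfl⟩
  exact upperQuantile_le_bound hp hq hpsum hα0 hα1 hW (by norm_num) (by norm_num)

lemma lb_lemma {m : ℕ} (hm : 0 < m) {p q : Fin m → ℝ} (hp : ∀ i, 0 < p i)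
    (hq : ∀ i, 0 < q i) (hpsum : ∑ i, p i = 1) {α : ℝ} (hα0 : 0 < α) (hα1 : α < 1)
    {ε : ℝ} (hε : 0 < ε) :
    ∃ N : ℕ, ∀ n : ℕ, N ≤ n →
      Real.exp (n * ((∑ i, p i * Real.log (p i / q i)) - ε))
        ≤ sSup (upperQuantile p n α '' closedSimplex q) := by
  set V : ℝ := ∑ i, p i * Real.log (p i / q i) with hV
  obtain ⟨r, hr1, hr2⟩ := slope_left hp hq hpsum hε
  set th : ℝ := 1 - r with hth
  have hth0 : 0 < th := by simp only [hth]; linarith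
  set W : Fin m → ℝ := fun i => p i / q i with hW
  have hWpos : ∀ i, 0 < W i := fun i => div_pos (hp i) (hq i)
  have hWmem : W ∈ closedSimplex q := kelly_mem_closedSimplex hp hq hpsum
  set A' : ℝ := ∑ i, p i * W i ^ (-th) with hA'
  have hA'F : A' = ∑ i, q i * (p i / q i) ^ r := by
    refine Finset.sum_congr rfl fun i _ => ?_
    have hc : (0:ℝ) < p i / q i := hWpos i
    have e : (p i / q i) ^ r = (p i / q i) * (p i / q i) ^ (r - 1) := by
      have := Real.rpow_add hc 1 (r - 1)
      rw [show (1:ℝ) + (r - 1) = r by ring, Real.rpow_one] at this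
      exact this
    rw [e, ← mul_assoc, mul_div_cancel₀ _ (hq i).ne',
      show -th = r - 1 by rw [hth]; ring]
  have hA'0 : 0 < A' :=
    Finset.sum_pos (fun i _ => mul_pos (hp i) (Real.rpow_pos_of_pos (hWpos i) _))
      (Finset.univ_nonempty_iff.mpr ⟨⟨0, hm⟩⟩)
  set c : ℝ := (V - ε) * th + Real.log A' with hc
  have hcneg : c < 0 := by
    have : Real.log A' < (V - ε) * (r - 1) := by rw [hA'F]; exact hr2
    have h2 : (V - ε) * (r - 1) = -((V - ε) * th) := by rw [hth]; ring
    rw [hc]; rw [h2] at this; linarith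
  have hexpc : Real.exp c < 1 := Real.exp_lt_one_iff.mpr hcneg
  have htend : Tendsto (fun n : ℕ => Real.exp c ^ n) atTop (𝓝 0) :=
    tendsto_pow_atTop_nhds_zero_of_lt_one (Real.exp_pos c).le hexpc
  have hev := htend.eventually (gt_mem_nhds (by linarith : (0:ℝ) < 1 - α))
  obtain ⟨N, hN⟩ := Filter.eventually_atTop.mp hev
  refine ⟨N, fun n hn => ?_⟩
  set t : ℝ := Real.exp (n * (V - ε)) with htdef
  have ht0 : 0 < t := Real.exp_pos _
  -- strict tail bound
  have hstrict : (∑ k ∈ countFinset m n, if mono W k < t then countProb p k else 0)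
      ≤ Real.exp c ^ n := by
    have hb := chernoff_strict (n := n) (fun i => (hp i).le) hWpos ht0 hth0
    have e1 : t ^ th = Real.exp ((n * (V - ε)) * th) := by
      rw [htdef, ← Real.exp_mul]
    have e2 : A' ^ n = Real.exp (n * Real.log A') := by
      rw [← Real.exp_log hA'0, ← Real.exp_nat_mul, Real.exp_log hA'0, Real.exp_nat_mul,
        Real.exp_log hA'0]
    calc (∑ k ∈ countFinset m n, if mono W k < t then countProb p k else 0)
        ≤ t ^ th * A' ^ n := hb
      _ = Real.exp ((n * (V - ε)) * th) * Real.exp (n * Real.log A') := by rw [e1, e2]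
      _ = Real.exp (n * c) := by rw [← Real.exp_add, hc]; ring_nf
      _ = Real.exp c ^ n := by rw [← Real.exp_nat_mul]
  have htail : α ≤ ∑ k ∈ countFinset m n, if t ≤ mono W k then countProb p k else 0 := by
    rw [tail_split n p hpsum W t]
    have := hN n hn
    nlinarith [hstrict]
  have htmem : t ∈ {s : ℝ | 0 ≤ s ∧
      α ≤ ∑ k ∈ countFinset m n, if s ≤ mono W k then countProb p k else 0} :=
    ⟨ht0.le, htail⟩
  have hbdd : BddAbove {s : ℝ | 0 ≤ s ∧
      α ≤ ∑ k ∈ countFinset m n, if s ≤ mono W k then countProb p k else 0} :=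
    ⟨(((∑ i, q i * (p i / q i) ^ (1 / (1 - (1:ℝ)/2))) ^ (1 - (1:ℝ)/2)) ^ n / α) ^ (1/((1:ℝ)/2)),
      fun s hs => qset_le_bound hp hq hα0 hWmem (by norm_num) (by norm_num) hs⟩
  have h1 : t ≤ upperQuantile p n α W := le_csSup hbdd htmem
  have h2 : upperQuantile p n α W ≤ sSup (upperQuantile p n α '' closedSimplex q) :=
    le_csSup (bddAbove_image hp hq hpsum hα0 hα1.le) (Set.mem_image_of_mem _ hWmem)
  exact le_trans h1 h2

lemma ub_lemma {m : ℕ} (hm : 0 < m) {p q : Fin m → ℝ} (hp : ∀ i, 0 < p i)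
    (hq : ∀ i, 0 < q i) (hpsum : ∑ i, p i = 1) {α : ℝ} (hα0 : 0 < α) (hα1 : α < 1)
    {ε : ℝ} (hε : 0 < ε) :
    ∃ N : ℕ, ∀ n : ℕ, N ≤ n →
      sSup (upperQuantile p n α '' closedSimplex q)
        ≤ Real.exp (n * ((∑ i, p i * Real.log (p i / q i)) + ε)) := by
  set V : ℝ := ∑ i, p i * Real.log (p i / q i) with hV
  obtain ⟨r, hr1, hr2⟩ := slope_right hp hq hpsum (by linarith : (0:ℝ) < ε/2)
  have hr0 : (0:ℝ) < r := by linarith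
  set lam : ℝ := 1 - 1/r with hlam
  have hlam0 : 0 < lam := by
    rw [hlam, sub_pos]
    exact (div_lt_one hr0).mpr hr1
  have hlam1 : lam < 1 := by
    rw [hlam]
    have : 0 < 1/r := by positivity
    linarith
  have hinv : 1 / (1 - lam) = r := by rw [hlam]; rw [sub_sub_cancel, one_div_one_div]
  set A : ℝ := ∑ i, q i * (p i / q i) ^ (1 / (1 - lam)) with hA
  have hAr : A = ∑ i, q i * (p i / q i) ^ r := by rw [hA, hinv]
  have hA0 : 0 < A := by
    rw [hAr]
    exact Finset.sum_pos (fun i _ => mul_pos (hq i)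
      (Real.rpow_pos_of_pos (div_pos (hp i) (hq i)) _))
      (Finset.univ_nonempty_iff.mpr ⟨⟨0, hm⟩⟩)
  have hlogA : Real.log A < (V + ε/2) * (r - 1) := by rw [hAr]; exact hr2
  set N : ℕ := ⌈(-Real.log α) / (lam * (ε/2))⌉₊ with hN
  refine ⟨N, fun n hn => ?_⟩
  set B : ℝ := ((A ^ (1 - lam)) ^ n / α) ^ (1/lam) with hB
  have hB0 : 0 < B := by
    apply Real.rpow_pos_of_pos
    exact div_pos (pow_pos (Real.rpow_pos_of_pos hA0 _) n) hα0
  have h1 : sSup (upperQuantile p n α '' closedSimplex q) ≤ B := by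
    apply csSup_le
    · exact ⟨upperQuantile p n α (fun i => p i / q i),
        Set.mem_image_of_mem _ (kelly_mem_closedSimplex hp hq hpsum)⟩
    · rintro y ⟨W, hW, rfl⟩
      exact upperQuantile_le_bound hp hq hpsum hα0 hα1.le hW hlam0 hlam1
  have hlogB : Real.log B ≤ n * (V + ε) := by
    have e1 : Real.log B = (1/lam) * (n * ((1 - lam) * Real.log A) - Real.log α) := by
      rw [hB, Real.log_rpow (div_pos (pow_pos (Real.rpow_pos_of_pos hA0 _) n) hα0),
        Real.log_div (pow_pos (Real.rpow_pos_of_pos hA0 _) n).ne' hα0.ne',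
        Real.log_pow, Real.log_rpow hA0]
    have e2 : (1/lam) * (1 - lam) = 1 / (r - 1) := by
      rw [hlam]
      have h1 : r ≠ 0 := hr0.ne'
      have h2 : r - 1 ≠ 0 := by intro h; rw [sub_eq_zero] at h; rw [h] at hr1; linarith
      field_simp
      ring
    have term1 : (n:ℝ) * ((1/lam) * (1 - lam) * Real.log A) ≤ n * (V + ε/2) := by
      apply mul_le_mul_of_nonneg_left _ (Nat.cast_nonneg n)
      rw [e2, one_div, inv_mul_eq_div, div_le_iff₀ (by linarith : (0:ℝ) < r - 1)]
      exact hlogA.le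
    have term2 : (1/lam) * (-Real.log α) ≤ n * (ε/2) := by
      have hx : (-Real.log α) / (lam * (ε/2)) ≤ (n:ℝ) := by
        calc (-Real.log α) / (lam * (ε/2)) ≤ (N:ℝ) := Nat.le_ceil _
          _ ≤ (n:ℝ) := Nat.cast_le.mpr hn
      have hpos : 0 < lam * (ε/2) := by positivity
      rw [div_le_iff₀ hpos] at hx
      calc (1/lam) * (-Real.log α) ≤ (1/lam) * ((n:ℝ) * (lam * (ε/2))) :=
            mul_le_mul_of_nonneg_left hx (by positivity)
        _ = n * (ε/2) := by field_simp
    calc Real.log B = (n:ℝ) * ((1/lam) * (1 - lam) * Real.log A) + (1/lam) * (-Real.log α) := by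
          rw [e1]; ring
      _ ≤ n * (V + ε/2) + n * (ε/2) := add_le_add term1 term2
      _ = n * (V + ε) := by ring
  calc sSup (upperQuantile p n α '' closedSimplex q) ≤ B := h1
    _ = Real.exp (Real.log B) := (Real.exp_log hB0).symm
    _ ≤ Real.exp (n * (V + ε)) := Real.exp_le_exp.mpr hlogB

end AuxKelly

/-- **Asymptotic value convergence to the Kelly value.**
`(1/n) log(sup_{W ∈ W̄} Q_{n,α}(W)) → Σ p_i log(p_i/q_i)`, and in particular the
supremum is strictly positive for all sufficiently large `n`. -/
theorem asymptotic_value_convergence (m : ℕ) (hm : 2 ≤ m)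
    (p q : Fin m → ℝ) (hp : ∀ i, 0 < p i ∧ p i < 1) (hpsum : ∑ i, p i = 1)
    (hq : ∀ i, 0 < q i) (α : ℝ) (hα : 0 < α ∧ α < 1) :
    Filter.Tendsto
      (fun n : ℕ => (1 / (n : ℝ)) *
        Real.log (sSup (upperQuantile p n α '' closedSimplex q)))
      Filter.atTop (nhds (∑ i, p i * Real.log (p i / q i))) ∧
    ∃ N : ℕ, ∀ n : ℕ, N ≤ n →
      0 < sSup (upperQuantile p n α '' closedSimplex q) := by

  have hm0 : 0 < m := by omega
  have hp' : ∀ i, 0 < p i := fun i => (hp i).1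
  set V : ℝ := ∑ i, p i * Real.log (p i / q i) with hV
  constructor
  · rw [Metric.tendsto_atTop]
    intro ε hε
    have hε4 : 0 < ε/4 := by linarith
    obtain ⟨N₁, hN₁⟩ := lb_lemma hm0 hp' hq hpsum hα.1 hα.2 hε4
    obtain ⟨N₂, hN₂⟩ := ub_lemma hm0 hp' hq hpsum hα.1 hα.2 hε4
    refine ⟨max (max N₁ N₂) 1, fun n hn => ?_⟩
    have hn1 : 1 ≤ n := le_trans (le_max_right _ _) hn
    have hnN₁ : N₁ ≤ n := le_trans (le_trans (le_max_left _ _) (le_max_left _ _)) hn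
    have hnN₂ : N₂ ≤ n := le_trans (le_trans (le_max_right _ _) (le_max_left _ _)) hn
    have hlb := hN₁ n hnN₁
    have hub := hN₂ n hnN₂
    set s : ℝ := sSup (upperQuantile p n α '' closedSimplex q) with hs
    have hs0 : 0 < s := lt_of_lt_of_le (Real.exp_pos _) hlb
    have hnR : (0:ℝ) < n := by exact_mod_cast hn1
    have hlog1 : (n:ℝ) * (V - ε/4) ≤ Real.log s := (Real.le_log_iff_exp_le hs0).mpr hlb
    have hlog2 : Real.log s ≤ (n:ℝ) * (V + ε/4) := (Real.log_le_iff_le_exp hs0).mpr hub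
    have b1 : V - ε/4 ≤ (1/(n:ℝ)) * Real.log s := by
      have := mul_le_mul_of_nonneg_left hlog1 (by positivity : (0:ℝ) ≤ 1/(n:ℝ))
      calc V - ε/4 = (1/(n:ℝ)) * ((n:ℝ) * (V - ε/4)) := by field_simp
        _ ≤ (1/(n:ℝ)) * Real.log s := this
    have b2 : (1/(n:ℝ)) * Real.log s ≤ V + ε/4 := by
      have := mul_le_mul_of_nonneg_left hlog2 (by positivity : (0:ℝ) ≤ 1/(n:ℝ))
      calc (1/(n:ℝ)) * Real.log s ≤ (1/(n:ℝ)) * ((n:ℝ) * (V + ε/4)) := this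
        _ = V + ε/4 := by field_simp
    rw [Real.dist_eq, abs_sub_lt_iff]
    constructor <;> linarith
  · obtain ⟨N, hN⟩ := lb_lemma hm0 hp' hq hpsum hα.1 hα.2 one_pos
    exact ⟨N, fun n hn => lt_of_lt_of_le (Real.exp_pos _) (hN n hn)⟩
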